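/- arXiv:1908.09694 — 2 statements merged into one kernel-verified Lean document; each statement's English description precedes it below -/
import Mathlib

section
/- Fix an odd integer e ≥ 3 and t ≥ 0, and let λ be a partition with 2-core Δ_t whose abacus A(τ(λ)) is totally e-periodic. For every partition σ such that ã_σ(τ(λ)) is defined in the sl_∞-crystal, the partition ã_σ(λ) := τ^{−1}(ã_σ(τ(λ))) has the same e-core as λ. -/
namespace GUnBranching

/-- A partition, given by its (0-indexed) weakly decreasing, eventually zero
sequence of parts: `part k` is the (k+1)-st part `λ_{k+1}`. -/
structure Partition where
  part : ℕ → ℕ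
  antitone : ∀ i j : ℕ, i ≤ j → part j ≤ part i
  eventually_zero : ∃ N : ℕ, ∀ n : ℕ, N ≤ n → part n = 0

namespace Partition

/-- The set of boxes (row, column) (0-indexed) of the Young diagram of a partition. -/
def boxSet (p : Partition) : Set (ℕ × ℕ) := {b | b.2 < p.part b.1}

/-- The size `|λ|` of a partition: the number of boxes of its Young diagram. -/
noncomputable def size (p : Partition) : ℕ := p.boxSet.ncard

/-- The β-set `β(λ) = {λ_k - k + 1 : k ≥ 1}` (0-indexed: `{part k - k : k ∈ ℕ}`). -/
def betaSet (p : Partition) : Set ℤ := {z | ∃ k : ℕ, z = (p.part k : ℤ) - k}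

/-- The charged β-set `{λ_k + s - k + 1 : k ≥ 1}` of `(λ, s)`. -/
def chargedBetaSet (p : Partition) (s : ℤ) : Set ℤ :=
  {z | ∃ k : ℕ, z = (p.part k : ℤ) + s - k}

/-- The number of (nonzero) parts of a partition. -/
noncomputable def length (p : Partition) : ℕ := {k : ℕ | p.part k ≠ 0}.ncard

end Partition

/-- The empty partition `∅`. -/
def emptyPartition : Partition :=
  ⟨fun _ => 0, fun _ _ _ => le_rfl, ⟨0, fun _ _ => rfl⟩⟩

/-- The partition `3^a 2^b 1^c` (a parts equal to 3, b parts equal to 2, c parts equal to 1). -/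
def threeTwoOne (a b c : ℕ) : Partition where
  part k := if k < a then 3 else if k < a + b then 2 else if k < a + b + c then 1 else 0
  antitone i j h := by (try dsimp only); split_ifs <;> omega
  eventually_zero := ⟨a + b + c, fun n hn => by (try dsimp only); split_ifs <;> omega⟩

/-- The column partition `1^m`. -/
def column (m : ℕ) : Partition := threeTwoOne 0 0 m

/-- The staircase partition `Δ_t = (t, t-1, …, 2, 1)`. -/
def staircase (t : ℕ) : Partition where
  part k := t - k
  antitone i j h := Nat.sub_le_sub_left h t
  eventually_zero := ⟨t, fun n hn => Nat.sub_eq_zero_of_le hn⟩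

/-- The partition `Δ_t ⊔ 1^r` (staircase with a column of `r` extra parts equal to 1). -/
def staircaseColumn (t r : ℕ) : Partition where
  part k := if k < t then t - k else if k < t + r then 1 else 0
  antitone i j h := by (try dsimp only); split_ifs <;> omega
  eventually_zero := ⟨t + r, fun n hn => by (try dsimp only); split_ifs <;> omega⟩

/-- `p ⊔ 1^r` : append `r` extra parts equal to 1 to the partition `p`. -/
noncomputable def appendOnes (p : Partition) (r : ℕ) : Partition where
  part k := max (p.part k) (if k < p.length + r then 1 else 0)
  antitone i j h := max_le_max (p.antitone i j h) (by split_ifs <;> omega)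
  eventually_zero := by
    obtain ⟨N, hN⟩ := p.eventually_zero
    refine ⟨max N (p.length + r), fun n hn => ?_⟩
    have h1 : p.part n = 0 := hN n (le_trans (le_max_left _ _) hn)
    have h2 : ¬ n < p.length + r := by
      have := le_trans (le_max_right N (p.length + r)) hn
      omega
    simp [h1, h2]

/-- `mu` is obtained from `lam` by removing one rim `e`-hook: on β-sets, a bead `x`
with an empty spot at `x - e` is moved to `x - e`. -/
def RemoveHook (e : ℕ) (lam mu : Partition) : Prop :=
  ∃ x : ℤ, x ∈ lam.betaSet ∧ (x - e) ∉ lam.betaSet ∧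
    mu.betaSet = insert (x - e) (lam.betaSet \ {x})

/-- A partition is an `e`-core if no rim `e`-hook can be removed from it. -/
def IsECore (e : ℕ) (p : Partition) : Prop := ∀ mu : Partition, ¬ RemoveHook e p mu

/-- `core` is the `e`-core of `lam`: it is obtained from `lam` by repeatedly removing
rim `e`-hooks, and no further rim `e`-hook can be removed. -/
def HasECore (e : ℕ) (lam core : Partition) : Prop :=
  Relation.ReflTransGen (RemoveHook e) lam core ∧ IsECore e core

/-- `lam` and `mu` have the same `e`-core. -/
def SameECore (e : ℕ) (lam mu : Partition) : Prop :=
  ∃ core : Partition, HasECore e lam core ∧ HasECore e mu core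

/-- `(q1, q2)` is the 2-quotient of `lam`: the odd (resp. even) β-numbers of `lam`,
transformed by `v ↦ (v+1)/2` (resp. `v ↦ v/2`), form the β-set of `q1` (resp. `q2`)
for a suitable charge. -/
def IsTwoQuotient (lam q1 q2 : Partition) : Prop :=
  (∃ c : ℤ, q1.chargedBetaSet c = {z : ℤ | 2 * z - 1 ∈ lam.betaSet}) ∧
  (∃ c : ℤ, q2.chargedBetaSet c = {z : ℤ | 2 * z ∈ lam.betaSet})

/-- The charge `s_t`: `(-(t+1+e)/2, t/2)` for even `t`, `(-(t+1)/2, (t+e)/2)` for odd `t`. -/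
def tauCharge (e t : ℕ) : ℤ × ℤ :=
  if t % 2 = 0 then (-(((t : ℤ) + 1 + e) / 2), (t : ℤ) / 2)
  else (-(((t : ℤ) + 1) / 2), ((t : ℤ) + e) / 2)

/-- `bp` is the twisted 2-quotient `τ(lam)` of `lam`, a partition with 2-core `Δ_t`:
it is the 2-quotient for even `t` and the swapped 2-quotient for odd `t`; the
corresponding charge is `tauCharge e t`. -/
def IsTwistedQuotient (t : ℕ) (lam : Partition) (bp : Partition × Partition) : Prop :=
  HasECore 2 lam (staircase t) ∧
  (if t % 2 = 0 then IsTwoQuotient lam bp.1 bp.2 else IsTwoQuotient lam bp.2 bp.1)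

/-- The abacus of a charged bipartition: positions are (column, row) where row
`0 : Fin 2` is the bottom row (first component, charge `s.1`) and row `1 : Fin 2`
the top row (second component, charge `s.2`). -/
def abacus (bp : Partition × Partition) (s : ℤ × ℤ) : Set (ℤ × Fin 2) :=
  {b | b.1 ∈ (if b.2 = (0 : Fin 2) then bp.1.chargedBetaSet s.1 else bp.2.chargedBetaSet s.2)}

/-- `P` is an `e`-period of the abacus `A`: beads `(x, r 0), (x-1, r 1), …, (x-e+1, r (e-1))`
of `A` where `x` is the largest column containing a bead of `A`, `r i = 0` (bottom row)
whenever `(x - i, bottom)` is a bead of `A` (for `i < e-1`), and once in the bottom row the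
period stays in the bottom row. -/
def IsEPeriodOf (e : ℕ) (A P : Set (ℤ × Fin 2)) : Prop :=
  ∃ (x : ℤ) (r : ℕ → Fin 2),
    P = {b | ∃ i : ℕ, i < e ∧ b = ((x - i : ℤ), r i)} ∧
    (∀ i : ℕ, i < e → ((x - i : ℤ), r i) ∈ A) ∧
    (∀ b ∈ A, b.1 ≤ x) ∧
    (∀ i : ℕ, i + 1 < e → ((x - i : ℤ), (0 : Fin 2)) ∈ A → r i = 0) ∧
    (∀ i : ℕ, i + 1 < e → r i = 0 → r (i + 1) = 0)

/-- `P 0, P 1, P 2, …` is the sequence of `e`-periods of `A`: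
each `P k` is the `e`-period of `A` minus the previous periods. -/
def IsPeriodSeq (e : ℕ) (A : Set (ℤ × Fin 2)) (P : ℕ → Set (ℤ × Fin 2)) : Prop :=
  ∀ k : ℕ, IsEPeriodOf e (A \ ⋃ i ∈ Finset.range k, P i) (P k)

/-- The abacus `A` is totally `e`-periodic: the `k`-th `e`-period exists for every `k`. -/
def TotallyPeriodic (e : ℕ) (A : Set (ℤ × Fin 2)) : Prop :=
  ∃ P : ℕ → Set (ℤ × Fin 2), IsPeriodSeq e A P

/-- `P` is the `(k+1)`-st `e`-period of `A` (so `k = 0` gives the first `e`-period). -/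
def IsKthPeriod (e : ℕ) (A : Set (ℤ × Fin 2)) (k : ℕ) (P : Set (ℤ × Fin 2)) : Prop :=
  ∃ Q : ℕ → Set (ℤ × Fin 2),
    (∀ i : ℕ, i ≤ k → IsEPeriodOf e (A \ ⋃ j ∈ Finset.range i, Q j) (Q i)) ∧ Q k = P

/-- Shift a set of abacus positions one step to the right. -/
def shiftRight (P : Set (ℤ × Fin 2)) : Set (ℤ × Fin 2) := {b | (b.1 - 1, b.2) ∈ P}

/-- Edge of the `sl_∞`-crystal moving the `(k+1)`-st `e`-period one step to the right:
the shifted period must again be the `(k+1)`-st `e`-period of the resulting abacus. -/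
def SlInfEdgeAt (e : ℕ) (s : ℤ × ℤ) (k : ℕ) (lam mu : Partition × Partition) : Prop :=
  TotallyPeriodic e (abacus lam s) ∧ TotallyPeriodic e (abacus mu s) ∧
  ∃ P : Set (ℤ × Fin 2),
    IsKthPeriod e (abacus lam s) k P ∧
    abacus mu s = (abacus lam s \ P) ∪ shiftRight P ∧
    IsKthPeriod e (abacus mu s) k (shiftRight P)

/-- Edge of the `sl_∞`-crystal. -/
def SlInfEdge (e : ℕ) (s : ℤ × ℤ) (lam mu : Partition × Partition) : Prop :=
  ∃ k : ℕ, SlInfEdgeAt e s k lam mu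

/-- A source vertex of the `sl_∞`-crystal: a vertex (totally `e`-periodic abacus)
with no incoming edge. -/
def IsSlInfSource (e : ℕ) (s : ℤ × ℤ) (bp : Partition × Partition) : Prop :=
  TotallyPeriodic e (abacus bp s) ∧ ∀ lam : Partition × Partition, ¬ SlInfEdge e s lam bp

/-- A box of a bipartition: (component, row, column), all 0-indexed
(component `0 : Fin 2` is the first component `λ¹`). -/
abbrev Box := Fin 2 × ℕ × ℕ

/-- The component of a bipartition indexed by `j : Fin 2`. -/
def comp (bp : Partition × Partition) (j : Fin 2) : Partition :=
  if j = 0 then bp.1 else bp.2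

/-- `b` is a box of the bipartition `bp`. -/
def IsBoxOf (bp : Partition × Partition) (b : Box) : Prop :=
  b.2.2 < (comp bp b.1).part b.2.1

/-- The (charged) content `ct(b) = y - x + s_j` of a box `b = (j, x, y)`. -/
def content (s : ℤ × ℤ) (b : Box) : ℤ :=
  (b.2.2 : ℤ) - (b.2.1 : ℤ) + (if b.1 = 0 then s.1 else s.2)

/-- `b` is an addable box of the bipartition `bp`. -/
def IsAddable (bp : Partition × Partition) (b : Box) : Prop :=
  b.2.2 = (comp bp b.1).part b.2.1 ∧
  (b.2.1 = 0 ∨ (comp bp b.1).part b.2.1 < (comp bp b.1).part (b.2.1 - 1))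

/-- `b` is a removable box of the bipartition `bp`. -/
def IsRemovable (bp : Partition × Partition) (b : Box) : Prop :=
  b.2.2 + 1 = (comp bp b.1).part b.2.1 ∧
  (comp bp b.1).part (b.2.1 + 1) < (comp bp b.1).part b.2.1

/-- The total order on addable/removable boxes: `b ≤ b'` iff `b = b'`, or
`ct(b) < ct(b')`, or the contents are equal, `b` lies in the second component and
`b'` in the first. -/
def boxLE (s : ℤ × ℤ) (b b' : Box) : Prop :=
  b = b' ∨ content s b < content s b' ∨
    (content s b = content s b' ∧ b.1 = 1 ∧ b'.1 = 0)

/-- The set of addable or removable boxes of residue `i` (the letters of the `i`-word). -/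
def IWord (e : ℕ) (s : ℤ × ℤ) (bp : Partition × Partition) (i : ZMod e) : Set Box :=
  {b | (IsAddable bp b ∨ IsRemovable bp b) ∧ ((content s b : ZMod e) = i)}

/-- A removable box of residue `i` surviving the Kashiwara cancellation: reading the
`i`-word in increasing order and cancelling each removable box with a following addable
box (recursively cancelling adjacent removable-addable pairs), `b` is not cancelled.
Equivalently, every final segment of the `i`-word starting at `b` contains strictly
more removable than addable boxes. -/
def SurvivingRemovable (e : ℕ) (s : ℤ × ℤ) (bp : Partition × Partition)
    (i : ZMod e) (b : Box) : Prop :=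
  b ∈ IWord e s bp i ∧ IsRemovable bp b ∧
  ∀ c ∈ IWord e s bp i, boxLE s b c →
    {d : Box | d ∈ IWord e s bp i ∧ IsAddable bp d ∧ boxLE s b d ∧ boxLE s d c}.ncard <
    {d : Box | d ∈ IWord e s bp i ∧ IsRemovable bp d ∧ boxLE s b d ∧ boxLE s d c}.ncard

/-- The good removable `i`-box: the smallest removable `i`-box surviving the
Kashiwara cancellation. -/
def IsGoodRemovable (e : ℕ) (s : ℤ × ℤ) (bp : Partition × Partition)
    (i : ZMod e) (b : Box) : Prop :=
  SurvivingRemovable e s bp i b ∧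
  ∀ b' : Box, SurvivingRemovable e s bp i b' → boxLE s b b'

/-- An addable box of residue `i` surviving the Kashiwara cancellation. -/
def SurvivingAddable (e : ℕ) (s : ℤ × ℤ) (bp : Partition × Partition)
    (i : ZMod e) (b : Box) : Prop :=
  b ∈ IWord e s bp i ∧ IsAddable bp b ∧
  ∀ c ∈ IWord e s bp i, boxLE s c b →
    {d : Box | d ∈ IWord e s bp i ∧ IsRemovable bp d ∧ boxLE s c d ∧ boxLE s d b}.ncard <
    {d : Box | d ∈ IWord e s bp i ∧ IsAddable bp d ∧ boxLE s c d ∧ boxLE s d b}.ncard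

/-- The good addable `i`-box: the largest addable `i`-box surviving the
Kashiwara cancellation. -/
def IsGoodAddable (e : ℕ) (s : ℤ × ℤ) (bp : Partition × Partition)
    (i : ZMod e) (b : Box) : Prop :=
  SurvivingAddable e s bp i b ∧
  ∀ b' : Box, SurvivingAddable e s bp i b' → boxLE s b' b

/-- A source vertex of the `ŝl_e`-crystal: no good removable `i`-box for any residue `i`. -/
def IsSlESource (e : ℕ) (s : ℤ × ℤ) (bp : Partition × Partition) : Prop :=
  ∀ (i : ZMod e) (b : Box), ¬ IsGoodRemovable e s bp i b

/-- `bp'` is obtained from `bp` by adding the box `b`. -/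
def AddBox (bp : Partition × Partition) (b : Box) (bp' : Partition × Partition) : Prop :=
  if b.1 = 0 then
    bp'.2 = bp.2 ∧ bp'.1.part = Function.update bp.1.part b.2.1 (bp.1.part b.2.1 + 1)
  else
    bp'.1 = bp.1 ∧ bp'.2.part = Function.update bp.2.part b.2.1 (bp.2.part b.2.1 + 1)

/-- Dominance order: `Dominates mu la` means `la ⊴ mu`. -/
def Dominates (mu la : Partition) : Prop :=
  ∀ k : ℕ, ∑ i ∈ Finset.range k, la.part i ≤ ∑ i ∈ Finset.range k, mu.part i


/-! ### Charge toolkit for cofinite-below, bounded-above subsets of ℤ -/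

def Ok (U : Set ℤ) : Prop :=
  (∃ M : ℤ, ∀ z : ℤ, z < M → z ∈ U) ∧ (∃ B : ℤ, ∀ z ∈ U, z ≤ B)

lemma Ok.finite_inter {U : Set ℤ} (h : Ok U) (a : ℤ) : (U ∩ Set.Ici a).Finite := by
  obtain ⟨⟨M, hM⟩, ⟨B, hB⟩⟩ := h
  apply Set.Finite.subset (Set.finite_Icc a B)
  rintro z ⟨hz, hz'⟩
  exact ⟨hz', hB z hz⟩

lemma ncard_Iio_nat (n : ℕ) : (Set.Iio n).ncard = n := by
  have : (Set.Iio n : Set ℕ) = ↑(Finset.range n) := by ext; simp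
  rw [this, Set.ncard_coe_finset, Finset.card_range]

lemma ncard_Ico_int (a b : ℤ) : (Set.Ico a b).ncard = (b - a).toNat := by
  have : (Set.Ico a b : Set ℤ) = ↑(Finset.Ico a b) := by ext; simp
  rw [this, Set.ncard_coe_finset, Int.card_Ico]

open Classical in
noncomputable def chg (U : Set ℤ) : ℤ :=
  if h : ∃ M : ℤ, ∀ z : ℤ, z < M → z ∈ U then
    ((U ∩ Set.Ici h.choose).ncard : ℤ) + h.choose
  else 0

lemma chg_window {U : Set ℤ} (hO : Ok U) {M M' : ℤ} (hM : ∀ z : ℤ, z < M → z ∈ U)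
    (hM' : ∀ z : ℤ, z < M' → z ∈ U) :
    ((U ∩ Set.Ici M).ncard : ℤ) + M = ((U ∩ Set.Ici M').ncard : ℤ) + M' := by
  wlog h : M ≤ M' generalizing M M'
  · exact (this hM' hM (by omega)).symm
  have hsplit : U ∩ Set.Ici M = (U ∩ Set.Ici M') ∪ Set.Ico M M' := by
    ext z
    constructor
    · rintro ⟨hz, hz'⟩
      by_cases hc : M' ≤ z
      · exact Or.inl ⟨hz, hc⟩
      · exact Or.inr ⟨hz', by omega⟩
    · rintro (⟨hz, hz'⟩ | ⟨h1, h2⟩)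
      · exact ⟨hz, by simp at hz' ⊢; omega⟩
      · exact ⟨hM' z h2, h1⟩
  have hdisj : Disjoint (U ∩ Set.Ici M') (Set.Ico M M') := by
    rw [Set.disjoint_left]
    rintro z ⟨_, h1⟩ ⟨_, h2⟩
    simp at h1; omega
  rw [hsplit, Set.ncard_union_eq hdisj (hO.finite_inter M') (Set.finite_Ico M M'),
    ncard_Ico_int]
  push_cast
  omega

lemma chg_eq {U : Set ℤ} (hO : Ok U) {M : ℤ} (hM : ∀ z : ℤ, z < M → z ∈ U) :
    chg U = ((U ∩ Set.Ici M).ncard : ℤ) + M := by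
  unfold chg
  rw [dif_pos ⟨M, hM⟩]
  exact chg_window hO (Exists.choose_spec (⟨M, hM⟩ : ∃ M : ℤ, ∀ z : ℤ, z < M → z ∈ U)) hM

lemma Ok_Iio (n : ℤ) : Ok (Set.Iio n) :=
  ⟨⟨n, fun z hz => hz⟩, ⟨n, fun z hz => le_of_lt hz⟩⟩

lemma chg_Iio (n : ℤ) : chg (Set.Iio n) = n := by
  rw [chg_eq (Ok_Iio n) (M := n) (fun z hz => hz)]
  have : Set.Iio n ∩ Set.Ici n = (∅ : Set ℤ) := by ext z; simp only [Set.mem_inter_iff, Set.mem_Iio, Set.mem_Ici, Set.mem_empty_iff_false, iff_false, not_and, not_le]; omega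
  simp [this]

lemma Ok_insert {U : Set ℤ} (hO : Ok U) (a : ℤ) : Ok (insert a U) := by
  obtain ⟨⟨M, hM⟩, ⟨B, hB⟩⟩ := hO
  exact ⟨⟨M, fun z hz => Or.inr (hM z hz)⟩, ⟨max a B, by
    rintro z (rfl | hz)
    · exact le_max_left _ _
    · exact le_trans (hB z hz) (le_max_right _ _)⟩⟩

lemma Ok_diff {U : Set ℤ} (hO : Ok U) (a : ℤ) : Ok (U \ {a}) := by
  obtain ⟨⟨M, hM⟩, ⟨B, hB⟩⟩ := hO
  refine ⟨⟨min M a, fun z hz => ⟨hM z (by omega), by simp; omega⟩⟩,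
    ⟨B, fun z hz => hB z hz.1⟩⟩

lemma chg_insert {U : Set ℤ} (hO : Ok U) {a : ℤ} (ha : a ∉ U) :
    chg (insert a U) = chg U + 1 := by
  obtain ⟨M, hM⟩ := hO.1
  set M' := min M a with hM'def
  have hM' : ∀ z : ℤ, z < M' → z ∈ U := fun z hz => hM z (by omega)
  have hM'' : ∀ z : ℤ, z < M' → z ∈ insert a U := fun z hz => Or.inr (hM' z hz)
  rw [chg_eq hO hM', chg_eq (Ok_insert hO a) hM'']
  have : insert a U ∩ Set.Ici M' = insert a (U ∩ Set.Ici M') := by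
    ext z; simp only [Set.mem_inter_iff, Set.mem_insert_iff, Set.mem_Ici]
    constructor
    · rintro ⟨(rfl | hz), hz'⟩
      · exact Or.inl rfl
      · exact Or.inr ⟨hz, hz'⟩
    · rintro (rfl | ⟨hz, hz'⟩)
      · exact ⟨Or.inl rfl, by omega⟩
      · exact ⟨Or.inr hz, hz'⟩
  rw [this, Set.ncard_insert_of_notMem (by simp [ha]) (hO.finite_inter M')]
  push_cast; ring

lemma chg_diff {U : Set ℤ} (hO : Ok U) {a : ℤ} (ha : a ∈ U) :
    chg (U \ {a}) = chg U - 1 := by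
  have h1 : insert a (U \ {a}) = U := by
    ext z; simp only [Set.mem_insert_iff, Set.mem_diff, Set.mem_singleton_iff]
    constructor
    · rintro (rfl | ⟨hz, _⟩) <;> assumption
    · intro hz; by_cases hza : z = a
      · exact Or.inl hza
      · exact Or.inr ⟨hz, hza⟩
  have := chg_insert (Ok_diff hO a) (a := a) (by simp)
  rw [h1] at this
  omega

lemma chg_exch {U : Set ℤ} (hO : Ok U) {a b : ℤ} (ha : a ∈ U) (hb : b ∉ U \ {a}) :
    chg (insert b (U \ {a})) = chg U := by
  by_cases hba : b = a
  · subst hba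
    have : insert b (U \ {b}) = U := by
      ext z; simp only [Set.mem_insert_iff, Set.mem_diff, Set.mem_singleton_iff]
      constructor
      · rintro (rfl | ⟨hz, _⟩) <;> assumption
      · intro hz; by_cases hzb : z = b
        · exact Or.inl hzb
        · exact Or.inr ⟨hz, hzb⟩
    rw [this]
  · rw [chg_insert (Ok_diff hO a) hb, chg_diff hO ha]
    ring

lemma Ok_shift {U : Set ℤ} (hO : Ok U) (d : ℤ) : Ok {z : ℤ | z - d ∈ U} := by
  obtain ⟨⟨M, hM⟩, ⟨B, hB⟩⟩ := hO
  exact ⟨⟨M + d, fun z hz => hM _ (by omega)⟩, ⟨B + d, fun z hz => by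
    have := hB _ hz; omega⟩⟩

lemma chg_shift {U : Set ℤ} (hO : Ok U) (d : ℤ) : chg {z : ℤ | z - d ∈ U} = chg U + d := by
  obtain ⟨M, hM⟩ := hO.1
  have hM' : ∀ z : ℤ, z < M + d → z ∈ {z : ℤ | z - d ∈ U} := fun z hz => hM _ (by omega)
  rw [chg_eq hO hM, chg_eq (Ok_shift hO d) hM']
  have himg : {z : ℤ | z - d ∈ U} ∩ Set.Ici (M + d) = (fun z => z + d) '' (U ∩ Set.Ici M) := by
    ext z
    simp only [Set.mem_inter_iff, Set.mem_setOf_eq, Set.mem_Ici, Set.mem_image]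
    constructor
    · rintro ⟨h1, h2⟩; exact ⟨z - d, ⟨h1, by omega⟩, by ring⟩
    · rintro ⟨w, ⟨h1, h2⟩, rfl⟩; exact ⟨by simpa using h1, by omega⟩
  rw [himg, Set.ncard_image_of_injective _ (add_left_injective d)]
  ring

/-! ### Decreasing enumeration of Ok sets -/

open Classical in
noncomputable def maxOf (U : Set ℤ) : ℤ :=
  if h : ∃ z ∈ U, ∀ y ∈ U, y ≤ z then h.choose else 0

lemma exists_max {U : Set ℤ} (hO : Ok U) : ∃ z ∈ U, ∀ y ∈ U, y ≤ z := by
  obtain ⟨M, hM⟩ := hO.1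
  have hne : (M - 1) ∈ U ∩ Set.Ici (M - 1) := ⟨hM _ (by omega), by simp⟩
  have hfin := hO.finite_inter (M - 1)
  obtain ⟨z, hz, hzmax⟩ := Set.Finite.exists_maximalFor id _ hfin ⟨M - 1, hne⟩
  refine ⟨z, hz.1, fun y hy => ?_⟩
  by_cases hyM : M - 1 ≤ y
  · by_contra hlt
    push_neg at hlt
    have := @hzmax y ⟨hy, hyM⟩ (le_of_lt hlt)
    simp only [id] at this
    omega
  · have : z ≥ M - 1 := hz.2
    omega

lemma maxOf_spec {U : Set ℤ} (hO : Ok U) : maxOf U ∈ U ∧ ∀ y ∈ U, y ≤ maxOf U := by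
  unfold maxOf
  rw [dif_pos (exists_max hO)]
  exact ⟨(exists_max hO).choose_spec.1, (exists_max hO).choose_spec.2⟩

lemma Ok_inter_Iio {U : Set ℤ} (hO : Ok U) (a : ℤ) : Ok (U ∩ Set.Iio a) := by
  obtain ⟨⟨M, hM⟩, ⟨B, hB⟩⟩ := hO
  exact ⟨⟨min M a, fun z hz => ⟨hM z (by omega), by simp; omega⟩⟩,
    ⟨B, fun z hz => hB z hz.1⟩⟩

noncomputable def enum (U : Set ℤ) : ℕ → ℤ
  | 0 => maxOf U
  | (k+1) => maxOf (U ∩ Set.Iio (enum U k))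

lemma enum_mem {U : Set ℤ} (hO : Ok U) : ∀ k, enum U k ∈ U := by
  intro k
  cases k with
  | zero => exact (maxOf_spec hO).1
  | succ k => exact (maxOf_spec (Ok_inter_Iio hO _)).1.1

lemma enum_succ_lt {U : Set ℤ} (hO : Ok U) (k : ℕ) : enum U (k+1) < enum U k :=
  (maxOf_spec (Ok_inter_Iio hO _)).1.2

lemma enum_strictAnti {U : Set ℤ} (hO : Ok U) : StrictAnti (enum U) :=
  strictAnti_nat_of_succ_lt (fun k => enum_succ_lt hO k)

lemma enum_count {U : Set ℤ} (hO : Ok U) :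
    ∀ k, (U ∩ Set.Ioi (enum U k)).ncard = k := by
  intro k
  induction k with
  | zero =>
    have : U ∩ Set.Ioi (enum U 0) = ∅ := by
      ext z
      simp only [Set.mem_inter_iff, Set.mem_Ioi, Set.mem_empty_iff_false, iff_false, not_and,
        not_lt]
      intro hz
      exact (maxOf_spec hO).2 z hz
    simp [this]
  | succ k ih =>
    have hstep : U ∩ Set.Ioi (enum U (k+1)) = insert (enum U k) (U ∩ Set.Ioi (enum U k)) := by
      ext z
      simp only [Set.mem_inter_iff, Set.mem_Ioi, Set.mem_insert_iff]
      constructor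
      · rintro ⟨hz, hz'⟩
        rcases lt_trichotomy z (enum U k) with h | h | h
        · exfalso
          have := (maxOf_spec (Ok_inter_Iio hO (enum U k))).2 z ⟨hz, h⟩
          show False
          have : enum U (k+1) = maxOf (U ∩ Set.Iio (enum U k)) := rfl
          omega
        · exact Or.inl h
        · exact Or.inr ⟨hz, h⟩
      · rintro (rfl | ⟨hz, hz'⟩)
        · exact ⟨enum_mem hO k, enum_succ_lt hO k⟩
        · exact ⟨hz, lt_trans (enum_succ_lt hO k) hz'⟩
    have hfin : (U ∩ Set.Ioi (enum U k)).Finite := by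
      apply Set.Finite.subset (hO.finite_inter (enum U k))
      rintro z ⟨h1, h2⟩; exact ⟨h1, Set.mem_Ici.mpr (le_of_lt (Set.mem_Ioi.mp h2))⟩
    rw [hstep, Set.ncard_insert_of_notMem (by simp) hfin, ih]

lemma count_inj {U : Set ℤ} (hO : Ok U) {z z' : ℤ} (hz : z ∈ U) (hz' : z' ∈ U)
    (h : (U ∩ Set.Ioi z).ncard = (U ∩ Set.Ioi z').ncard) : z = z' := by
  rcases lt_trichotomy z z' with hlt | he | hlt
  · exfalso
    have hsub : insert z' (U ∩ Set.Ioi z') ⊆ U ∩ Set.Ioi z := by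
      rintro y (rfl | ⟨h1, h2⟩)
      · exact ⟨hz', hlt⟩
      · exact ⟨h1, lt_trans hlt h2⟩
    have hfin : (U ∩ Set.Ioi z).Finite := by
      apply Set.Finite.subset (hO.finite_inter z)
      rintro y ⟨h1, h2⟩; exact ⟨h1, Set.mem_Ici.mpr (le_of_lt (Set.mem_Ioi.mp h2))⟩
    have hfin' : (U ∩ Set.Ioi z').Finite := by
      apply Set.Finite.subset (hO.finite_inter z')
      rintro y ⟨h1, h2⟩; exact ⟨h1, Set.mem_Ici.mpr (le_of_lt (Set.mem_Ioi.mp h2))⟩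
    have hle := Set.ncard_le_ncard hsub hfin
    rw [Set.ncard_insert_of_notMem (by simp) hfin'] at hle
    omega
  · exact he
  · exfalso
    have hsub : insert z (U ∩ Set.Ioi z) ⊆ U ∩ Set.Ioi z' := by
      rintro y (rfl | ⟨h1, h2⟩)
      · exact ⟨hz, hlt⟩
      · exact ⟨h1, lt_trans hlt h2⟩
    have hfin : (U ∩ Set.Ioi z).Finite := by
      apply Set.Finite.subset (hO.finite_inter z)
      rintro y ⟨h1, h2⟩; exact ⟨h1, Set.mem_Ici.mpr (le_of_lt (Set.mem_Ioi.mp h2))⟩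
    have hfin' : (U ∩ Set.Ioi z').Finite := by
      apply Set.Finite.subset (hO.finite_inter z')
      rintro y ⟨h1, h2⟩; exact ⟨h1, Set.mem_Ici.mpr (le_of_lt (Set.mem_Ioi.mp h2))⟩
    have hle := Set.ncard_le_ncard hsub hfin'
    rw [Set.ncard_insert_of_notMem (by simp) hfin] at hle
    omega

lemma enum_surj {U : Set ℤ} (hO : Ok U) {z : ℤ} (hz : z ∈ U) :
    z = enum U ((U ∩ Set.Ioi z).ncard) :=
  count_inj hO hz (enum_mem hO _) (by rw [enum_count hO])

lemma enum_range {U : Set ℤ} (hO : Ok U) : Set.range (enum U) = U := by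
  ext z
  constructor
  · rintro ⟨k, rfl⟩; exact enum_mem hO k
  · intro hz; exact ⟨_, (enum_surj hO hz).symm⟩

/-- Uniqueness of strictly decreasing enumerations. -/
lemma strictAnti_range_eq {g g' : ℕ → ℤ} (hg : StrictAnti g) (hg' : StrictAnti g')
    (h : Set.range g = Set.range g') : g = g' := by
  funext k
  induction k using Nat.strong_induction_on with
  | _ k ih =>
    rcases lt_trichotomy (g k) (g' k) with hlt | he | hlt
    · exfalso
      have : g' k ∈ Set.range g := h ▸ Set.mem_range_self k
      obtain ⟨i, hi⟩ := this
      have hik : i < k := by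
        by_contra hik
        have := hg.antitone (not_lt.mp hik)
        omega
      rw [ih i hik] at hi
      have := hg'.injective hi
      omega
    · exact he
    · exfalso
      have : g k ∈ Set.range g' := h ▸ Set.mem_range_self k
      obtain ⟨i, hi⟩ := this
      have hik : i < k := by
        by_contra hik
        have := hg'.antitone (not_lt.mp hik)
        omega
      rw [← ih i hik] at hi
      have := hg.injective hi
      omega

lemma enum_eventual {U : Set ℤ} (hO : Ok U) {M : ℤ} (hM : ∀ z : ℤ, z < M → z ∈ U)
    (k : ℕ) (hk : (k : ℤ) ≥ chg U - M) : enum U k = chg U - 1 - k := by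
  have hzdef : ∃ z : ℤ, z = chg U - 1 - (k : ℤ) := ⟨_, rfl⟩
  obtain ⟨z, hzdef⟩ := hzdef
  have hzM : z < M := by omega
  have hzU : z ∈ U := hM z hzM
  have hwin : ∀ y : ℤ, y < z + 1 → y ∈ U := fun y hy => hM y (by omega)
  have hcount : (U ∩ Set.Ioi z).ncard = k := by
    have h1 : U ∩ Set.Ioi z = U ∩ Set.Ici (z + 1) := by
      ext y
      simp only [Set.mem_inter_iff, Set.mem_Ioi, Set.mem_Ici]
      constructor <;> rintro ⟨h1, h2⟩ <;> exact ⟨h1, by omega⟩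
    have h2 := chg_eq hO hwin
    rw [h1] at *
    omega
  have := enum_surj hO hzU
  rw [hcount] at this
  omega

/-! ### Partitions and β-sets -/

lemma Partition.ext' {p q : Partition} (h : p.part = q.part) : p = q := by
  cases p; cases q; simp_all

def bfun (p : Partition) : ℕ → ℤ := fun k => (p.part k : ℤ) - k

lemma bfun_strictAnti (p : Partition) : StrictAnti (bfun p) := by
  apply strictAnti_nat_of_succ_lt
  intro k
  have := p.antitone k (k+1) (by omega)
  unfold bfun
  push_cast
  omega

lemma betaSet_eq_range (p : Partition) : p.betaSet = Set.range (bfun p) := by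
  ext z; simp [Partition.betaSet, bfun, eq_comm]

lemma bfun_ge (p : Partition) (k : ℕ) : -(k : ℤ) ≤ bfun p k := by
  have : (0:ℤ) ≤ (p.part k : ℤ) := Int.ofNat_nonneg _
  unfold bfun; omega

lemma bfun_eventual (p : Partition) : ∃ N : ℕ, ∀ k : ℕ, N ≤ k → bfun p k = -(k : ℤ) := by
  obtain ⟨N, hN⟩ := p.eventually_zero
  exact ⟨N, fun k hk => by unfold bfun; rw [hN k hk]; push_cast; ring⟩

lemma Ok_betaSet (p : Partition) : Ok p.betaSet := by
  obtain ⟨N, hN⟩ := bfun_eventual p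
  rw [betaSet_eq_range]
  constructor
  · refine ⟨-(N : ℤ), fun z hz => ?_⟩
    refine ⟨(-z).toNat, ?_⟩
    have h1 : N ≤ (-z).toNat := by omega
    rw [hN _ h1]
    omega
  · exact ⟨bfun p 0, by rintro z ⟨k, rfl⟩; exact (bfun_strictAnti p).antitone (Nat.zero_le k)⟩

lemma chg_betaSet (p : Partition) : chg p.betaSet = 1 := by
  obtain ⟨N, hN⟩ := bfun_eventual p
  have hM : ∀ z : ℤ, z < 1 - (N : ℤ) → z ∈ p.betaSet := by
    intro z hz
    rw [betaSet_eq_range]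
    refine ⟨(-z).toNat, ?_⟩
    rw [hN _ (by omega)]
    omega
  rw [chg_eq (Ok_betaSet p) hM]
  have himg : p.betaSet ∩ Set.Ici (1 - (N : ℤ)) = bfun p '' Set.Iio N := by
    rw [betaSet_eq_range]
    ext z
    simp only [Set.mem_inter_iff, Set.mem_range, Set.mem_Ici, Set.mem_image, Set.mem_Iio]
    constructor
    · rintro ⟨⟨k, rfl⟩, hge⟩
      refine ⟨k, ?_, rfl⟩
      by_contra hk
      rw [hN k (by omega)] at hge
      omega
    · rintro ⟨k, hk, rfl⟩
      have := bfun_ge p k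
      exact ⟨⟨k, rfl⟩, by omega⟩
  rw [himg, Set.ncard_image_of_injective _ (bfun_strictAnti p).injective,
    ncard_Iio_nat]
  push_cast; ring

lemma enum_add_le {U : Set ℤ} (hO : Ok U) (i d : ℕ) :
    enum U (i + d) + (d : ℤ) ≤ enum U i := by
  induction d with
  | zero => simp
  | succ d ih =>
    have h1 := enum_succ_lt hO (i + d)
    have h2 : i + (d + 1) = (i + d) + 1 := rfl
    rw [h2]
    push_cast at *
    omega

lemma enum_betaSet (p : Partition) : enum p.betaSet = bfun p :=
  strictAnti_range_eq (enum_strictAnti (Ok_betaSet p)) (bfun_strictAnti p)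
    (by rw [enum_range (Ok_betaSet p), betaSet_eq_range])

lemma betaSet_inj {p q : Partition} (h : p.betaSet = q.betaSet) : p = q := by
  apply Partition.ext'
  funext k
  have h1 : bfun p = bfun q := by rw [← enum_betaSet, ← enum_betaSet, h]
  have h2 : bfun p k = bfun q k := by rw [h1]
  unfold bfun at h2
  omega

/-- Construct a partition with a given β-set. -/
lemma exists_partition_of_beta {U : Set ℤ} (hO : Ok U) (h1 : chg U = 1) :
    ∃ p : Partition, p.betaSet = U := by
  obtain ⟨M, hM⟩ := hO.1
  have hev : ∀ k : ℕ, (k : ℤ) ≥ 1 - M → enum U k = -(k : ℤ) := by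
    intro k hk
    rw [enum_eventual hO hM k (by omega), h1]
    ring
  have hge : ∀ k : ℕ, -(k : ℤ) ≤ enum U k := by
    intro k
    set K := max k (1 - M).toNat with hK
    have h2 : enum U K = -(K : ℤ) := hev K (by omega)
    have h4 := enum_add_le hO k (K - k)
    have h5 : k + (K - k) = K := by omega
    rw [h5] at h4
    push_cast at h4 ⊢
    omega
  refine ⟨⟨fun k => (enum U k + k).toNat, ?_, ?_⟩, ?_⟩
  · intro i j hij
    have h4 := enum_add_le hO i (j - i)
    have h5 : i + (j - i) = j := by omega
    rw [h5] at h4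
    have := hge i; have := hge j
    omega
  · refine ⟨(1 - M).toNat, fun n hn => ?_⟩
    have := hev n (by omega)
    omega
  · have hbf : ∀ k : ℕ, ((((enum U k + k).toNat : ℤ)) - k) = enum U k := by
      intro k
      have := hge k
      omega
    ext z
    unfold Partition.betaSet
    simp only [Set.mem_setOf_eq]
    constructor
    · rintro ⟨k, rfl⟩
      rw [hbf k]
      exact enum_mem hO k
    · intro hz
      refine ⟨(U ∩ Set.Ioi z).ncard, ?_⟩
      rw [hbf]
      exact enum_surj hO hz

/-! ### Residue class charges and e-cores -/

def Tc (en c : ℤ) (U : Set ℤ) : Set ℤ := {m : ℤ | c + en * m ∈ U}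

lemma Ok_Tc {en : ℤ} (hen : 0 < en) (c : ℤ) {U : Set ℤ} (hO : Ok U) : Ok (Tc en c U) := by
  obtain ⟨⟨M, hM⟩, ⟨B, hB⟩⟩ := hO
  constructor
  · refine ⟨min 0 (M - c), fun m hm => ?_⟩
    have h1 : en * m ≤ 1 * m := mul_le_mul_of_nonpos_right (by omega) (by omega)
    rw [one_mul] at h1
    exact hM _ (by omega)
  · refine ⟨max 0 (B - c), fun m hm => ?_⟩
    have := hB _ hm
    rcases le_or_gt m 0 with h | h
    · omega
    · have h1 : m ≤ en * m := le_mul_of_one_le_left (le_of_lt h) (by omega)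
      omega

lemma Tc_insert_diff {en c x : ℤ} (hen : 0 < en) {S : Set ℤ} :
    ∀ m : ℤ, c + en * m = x →
      Tc en c (insert (x - en) (S \ {x})) = insert (m - 1) (Tc en c S \ {m}) := by
  intro m hm
  ext m'
  simp only [Tc, Set.mem_setOf_eq, Set.mem_insert_iff, Set.mem_diff, Set.mem_singleton_iff]
  constructor
  · rintro (h | ⟨h1, h2⟩)
    · left
      have h2 : en * (m' - m + 1) = 0 := by linear_combination h - hm
      rcases mul_eq_zero.mp h2 with h3 | h3 <;> omega
    · right
      refine ⟨h1, fun hc => h2 (by rw [hc, hm])⟩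
  · rintro (rfl | ⟨h1, h2⟩)
    · left; linear_combination hm
    · right
      refine ⟨h1, fun hc => h2 ?_⟩
      have h3 : en * (m' - m) = 0 := by linear_combination hc - hm
      rcases mul_eq_zero.mp h3 with h4 | h4 <;> omega

lemma Tc_unchanged {en c x : ℤ} (hen : 0 < en) {S : Set ℤ}
    (h : ¬ ∃ m : ℤ, c + en * m = x) :
    Tc en c (insert (x - en) (S \ {x})) = Tc en c S := by
  ext m'
  simp only [Tc, Set.mem_setOf_eq, Set.mem_insert_iff, Set.mem_diff, Set.mem_singleton_iff]
  constructor
  · rintro (hh | ⟨h1, _⟩)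
    · exact absurd ⟨m' + 1, by linear_combination hh⟩ h
    · exact h1
  · intro h1
    right
    exact ⟨h1, fun hc => h ⟨m', hc⟩⟩

lemma chg_Tc_removeHook {en : ℕ} (hen : 0 < en) {p q : Partition}
    (h : RemoveHook en p q) (c : ℤ) :
    chg (Tc en c q.betaSet) = chg (Tc en c p.betaSet) := by
  obtain ⟨x, hx, hx', hq⟩ := h
  have henz : (0:ℤ) < en := by exact_mod_cast hen
  rw [hq]
  by_cases hm : ∃ m : ℤ, c + en * m = x
  · obtain ⟨m, hm⟩ := hm
    rw [Tc_insert_diff henz m hm]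
    apply chg_exch (Ok_Tc henz c (Ok_betaSet p))
    · show c + (en:ℤ) * m ∈ p.betaSet
      rw [hm]; exact hx
    · rintro ⟨h1, _⟩
      apply hx'
      have h5 : c + (en:ℤ) * (m - 1) = x - en := by linear_combination hm
      rw [← h5]
      exact h1
  · rw [Tc_unchanged henz hm]

lemma chg_Tc_reflTrans {en : ℕ} (hen : 0 < en) {p q : Partition}
    (h : Relation.ReflTransGen (RemoveHook en) p q) (c : ℤ) :
    chg (Tc en c q.betaSet) = chg (Tc en c p.betaSet) := by
  induction h with
  | refl => rfl
  | tail _ hstep ih => rw [chg_Tc_removeHook hen hstep c]; exact ih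

lemma removeHook_exists {en : ℕ} (hen : 0 < en) {p : Partition} {x : ℤ}
    (hx : x ∈ p.betaSet) (hx' : x - en ∉ p.betaSet) :
    ∃ q : Partition, RemoveHook en p q := by
  have hO := Ok_betaSet p
  have hO' : Ok (insert (x - (en:ℤ)) (p.betaSet \ {x})) := Ok_insert (Ok_diff hO x) _
  have hchg : chg (insert (x - (en:ℤ)) (p.betaSet \ {x})) = 1 := by
    rw [chg_exch hO hx (fun hc => hx' hc.1)]
    exact chg_betaSet p
  obtain ⟨q, hq⟩ := exists_partition_of_beta hO' hchg
  exact ⟨q, x, hx, hx', hq⟩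

lemma isECore_iff_closed {en : ℕ} (hen : 0 < en) (p : Partition) :
    IsECore en p ↔ ∀ x ∈ p.betaSet, x - en ∈ p.betaSet := by
  constructor
  · intro h x hx
    by_contra hx'
    obtain ⟨q, hq⟩ := removeHook_exists hen hx hx'
    exact h q hq
  · rintro h q ⟨x, hx, hx', _⟩
    exact hx' (h x hx)

lemma closed_pred_Iio {U : Set ℤ} (hO : Ok U) (h : ∀ m ∈ U, m - 1 ∈ U) :
    U = Set.Iio (chg U) := by
  obtain ⟨z, hz, hzmax⟩ := exists_max hO
  have hdown : ∀ n : ℕ, ∀ m ∈ U, m - (n : ℤ) ∈ U := by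
    intro n
    induction n with
    | zero => intro m hm; simpa using hm
    | succ n ih =>
      intro m hm
      have := h _ (ih m hm)
      push_cast
      have heq : m - ((n:ℤ)+1) = m - n - 1 := by ring
      rw [heq]; exact this
  have hIic : U = Set.Iic z := by
    ext y
    constructor
    · exact fun hy => hzmax y hy
    · intro hy
      have := hdown (z - y).toNat z hz
      have heq : z - ((z - y).toNat : ℤ) = y := by
        simp only [Set.mem_Iic] at hy
        omega
      rwa [heq] at this
  have hIio : Set.Iic z = Set.Iio (z + 1) := by ext y; simp
  rw [hIic, hIio, chg_Iio]

lemma core_beta_eq {en : ℕ} (hen : 0 < en) {q q' : Partition}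
    (hq : IsECore en q) (hq' : IsECore en q')
    (h : ∀ c : ℤ, chg (Tc en c q.betaSet) = chg (Tc en c q'.betaSet)) : q = q' := by
  have henz : (0:ℤ) < en := by exact_mod_cast hen
  have key : ∀ r : Partition, IsECore en r → ∀ c : ℤ,
      Tc (en:ℤ) c r.betaSet = Set.Iio (chg (Tc (en:ℤ) c r.betaSet)) := by
    intro r hr c
    apply closed_pred_Iio (Ok_Tc henz c (Ok_betaSet r))
    intro m hm
    have hcl := (isECore_iff_closed hen r).mp hr
    have := hcl _ hm
    show c + (en:ℤ) * (m - 1) ∈ r.betaSet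
    have heq : c + (en:ℤ) * (m - 1) = (c + en * m) - en := by ring
    rw [heq]; exact this
  apply betaSet_inj
  ext z
  have hdecomp : ∀ (S : Set ℤ), z ∈ S ↔ (z / (en:ℤ)) ∈ Tc en (z % (en:ℤ)) S := by
    intro S
    have hz : z % (en:ℤ) + en * (z / en) = z := Int.emod_add_mul_ediv z en
    show z ∈ S ↔ z % (en:ℤ) + en * (z / en) ∈ S
    rw [hz]
  rw [hdecomp, hdecomp, key q hq, key q' hq', h]

/-! ### Size decreases under hook removal; existence of cores -/

noncomputable def msum (p : Partition) : ℕ :=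
  ∑ k ∈ Finset.range p.eventually_zero.choose, p.part k

lemma sum_range_part_eq {p : Partition} {N N' : ℕ} (hN : p.part N = 0) (hNN' : N ≤ N') :
    ∑ k ∈ Finset.range N' , p.part k = ∑ k ∈ Finset.range N, p.part k := by
  symm
  apply Finset.sum_subset (by simp; omega)
  intro k _ hk
  simp only [Finset.mem_range, not_lt] at hk
  have := p.antitone N k (by omega)
  omega

lemma msum_eq {p : Partition} {N : ℕ} (hN : p.part N = 0) :
    (msum p : ℤ) = ∑ k ∈ Finset.range N, (p.part k : ℤ) := by
  unfold msum
  have hc := p.eventually_zero.choose_spec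
  set N0 := p.eventually_zero.choose with hN0
  have h1 := sum_range_part_eq (p := p) (hc N0 le_rfl) (le_max_left N0 N)
  have h2 := sum_range_part_eq (p := p) hN (le_max_right N0 N)
  rw [← h1, h2]
  push_cast
  rfl

/-- The windowed β-set as a finset. -/
lemma beta_window_sum {p : Partition} {N : ℕ} (hN : p.part N = 0) :
    ∑ k ∈ Finset.range N, (p.part k : ℤ) =
      ∑ z ∈ (Finset.range N).image (bfun p), z + ∑ k ∈ Finset.range N, (k : ℤ) := by
  rw [Finset.sum_image (by
    intro a _ b _ hab
    exact (bfun_strictAnti p).injective hab)]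
  rw [← Finset.sum_add_distrib]
  apply Finset.sum_congr rfl
  intro k _
  unfold bfun
  ring

lemma beta_window_coe {p : Partition} {N : ℕ} (hN : p.part N = 0) :
    ((Finset.range N).image (bfun p) : Set ℤ) = p.betaSet ∩ Set.Ioi (-(N:ℤ)) := by
  ext z
  simp only [Finset.coe_image, Finset.coe_range, Set.mem_image, Set.mem_Iio,
    Set.mem_inter_iff, Set.mem_Ioi, betaSet_eq_range, Set.mem_range]
  constructor
  · rintro ⟨k, hk, rfl⟩
    refine ⟨⟨k, rfl⟩, ?_⟩
    have := bfun_ge p k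
    omega
  · rintro ⟨⟨k, rfl⟩, hgt⟩
    refine ⟨k, ?_, rfl⟩
    by_contra hk
    push_neg at hk
    have h0 : p.part k = 0 := by
      have := p.antitone N k hk
      omega
    unfold bfun at hgt
    rw [h0] at hgt
    push_cast at hgt
    omega

lemma msum_removeHook {en : ℕ} (hen : 0 < en) {p q : Partition} (h : RemoveHook en p q) :
    (msum q : ℤ) = (msum p : ℤ) - en := by
  obtain ⟨x, hx, hx', hq⟩ := h
  obtain ⟨Np, hNp⟩ := p.eventually_zero
  obtain ⟨Nq, hNq⟩ := q.eventually_zero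
  set N : ℕ := max (max Np Nq) ((en : ℤ) - x + 1).toNat with hNdef
  have hNp' : p.part N = 0 := hNp N (by omega)
  have hNq' : q.part N = 0 := hNq N (by omega)
  have hxN : -(N:ℤ) < x - en := by
    have : ((en : ℤ) - x + 1).toNat ≤ N := by omega
    omega
  have hxN' : -(N:ℤ) < x := by omega
  -- finset windows
  have hcoeq : ((Finset.range N).image (bfun q) : Set ℤ) =
      insert (x - (en:ℤ)) ((((Finset.range N).image (bfun p)) : Set ℤ) \ {x}) := by
    rw [beta_window_coe hNq', beta_window_coe hNp', hq]
    ext z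
    simp only [Set.mem_inter_iff, Set.mem_insert_iff, Set.mem_diff, Set.mem_singleton_iff,
      Set.mem_Ioi]
    constructor
    · rintro ⟨(rfl | ⟨h1, h2⟩), h3⟩
      · exact Or.inl rfl
      · exact Or.inr ⟨⟨h1, h3⟩, h2⟩
    · rintro (rfl | ⟨⟨h1, h3⟩, h2⟩)
      · exact ⟨Or.inl rfl, hxN⟩
      · exact ⟨Or.inr ⟨h1, h2⟩, h3⟩
  have hfeq : (Finset.range N).image (bfun q) =
      insert (x - (en:ℤ)) (((Finset.range N).image (bfun p)).erase x) := by
    apply Finset.coe_injective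
    rw [hcoeq]
    simp only [Finset.coe_insert, Finset.coe_erase]
  have hxmem : x ∈ (Finset.range N).image (bfun p) := by
    have : x ∈ p.betaSet ∩ Set.Ioi (-(N:ℤ)) := ⟨hx, hxN'⟩
    rw [← beta_window_coe hNp'] at this
    exact_mod_cast this
  have hxnot : x - (en:ℤ) ∉ ((Finset.range N).image (bfun p)).erase x := by
    intro hc
    apply hx'
    have := Finset.erase_subset x _ hc
    have h2 : (x - (en:ℤ)) ∈ (((Finset.range N).image (bfun p)) : Set ℤ) := by
      exact_mod_cast this
    rw [beta_window_coe hNp'] at h2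
    exact h2.1
  have hsum : ∑ z ∈ (Finset.range N).image (bfun q), z =
      (∑ z ∈ (Finset.range N).image (bfun p), z) - en := by
    rw [hfeq, Finset.sum_insert hxnot, Finset.sum_erase_eq_sub hxmem]
    ring
  rw [msum_eq hNp', msum_eq hNq', beta_window_sum hNp', beta_window_sum hNq', hsum]
  ring

lemma exists_core (en : ℕ) (hen : 0 < en) (p : Partition) :
    ∃ q : Partition, HasECore en p q := by
  generalize hn : msum p = n
  induction n using Nat.strong_induction_on generalizing p with
  | _ n ih =>
    by_cases hcl : ∀ x ∈ p.betaSet, x - (en:ℤ) ∈ p.betaSet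
    · exact ⟨p, Relation.ReflTransGen.refl, (isECore_iff_closed hen p).mpr hcl⟩
    · push_neg at hcl
      obtain ⟨x, hx, hx'⟩ := hcl
      obtain ⟨q, hq⟩ := removeHook_exists hen hx hx'
      have hlt : msum q < n := by
        have := msum_removeHook hen hq
        omega
      obtain ⟨r, hr1, hr2⟩ := ih (msum q) hlt q rfl
      exact ⟨r, Relation.ReflTransGen.head hq hr1, hr2⟩

/-! ### Abacus rows, the map φ, and the edge invariance -/

lemma fin2_cases (j : Fin 2) : j = 0 ∨ j = 1 := by omega

def rowS (j : Fin 2) (X : Set (ℤ × Fin 2)) : Set ℤ := {v : ℤ | (v, j) ∈ X}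

lemma chargedBetaSet_eq_shift (p : Partition) (s : ℤ) :
    p.chargedBetaSet s = {z : ℤ | z - s ∈ p.betaSet} := by
  ext z
  simp only [Partition.chargedBetaSet, Partition.betaSet, Set.mem_setOf_eq]
  constructor
  · rintro ⟨k, rfl⟩; exact ⟨k, by ring⟩
  · rintro ⟨k, hk⟩; exact ⟨k, by omega⟩

lemma Ok_chargedBetaSet (p : Partition) (s : ℤ) : Ok (p.chargedBetaSet s) := by
  rw [chargedBetaSet_eq_shift]; exact Ok_shift (Ok_betaSet p) s

lemma chg_chargedBetaSet (p : Partition) (s : ℤ) : chg (p.chargedBetaSet s) = s + 1 := by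
  rw [chargedBetaSet_eq_shift, chg_shift (Ok_betaSet p) s, chg_betaSet]
  ring

lemma rowS_abacus (w : Partition × Partition) (s : ℤ × ℤ) (j : Fin 2) :
    rowS j (abacus w s) =
      (if j = 0 then w.1 else w.2).chargedBetaSet (if j = 0 then s.1 else s.2) := by
  rcases fin2_cases j with rfl | rfl
  · ext v; simp [rowS, abacus]
  · ext v
    simp only [rowS, abacus, Set.mem_setOf_eq]
    norm_num

lemma Ok_rowS_abacus (w : Partition × Partition) (s : ℤ × ℤ) (j : Fin 2) :
    Ok (rowS j (abacus w s)) := by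
  rw [rowS_abacus]; exact Ok_chargedBetaSet _ _

lemma chg_rowS_abacus (w : Partition × Partition) (s : ℤ × ℤ) (j : Fin 2) :
    chg (rowS j (abacus w s)) = (if j = 0 then s.1 else s.2) + 1 := by
  rw [rowS_abacus]; exact chg_chargedBetaSet _ _

def phi (a0 a1 : ℤ) (b : ℤ × Fin 2) : ℤ := 2 * b.1 + (if b.2 = 0 then a0 else a1)

lemma phi0 (a0 a1 v : ℤ) : phi a0 a1 (v, 0) = 2 * v + a0 := by simp [phi]

lemma phi1 (a0 a1 v : ℤ) : phi a0 a1 (v, 1) = 2 * v + a1 := by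
  have h : ((1 : Fin 2) = 0) = False := by norm_num
  simp [phi, h]

lemma phi_inj {a0 a1 : ℤ} (hpar : Odd (a0 - a1)) : Function.Injective (phi a0 a1) := by
  rintro ⟨v, j⟩ ⟨v', j'⟩ h
  obtain ⟨g, hg⟩ := hpar
  rcases fin2_cases j with rfl | rfl <;> rcases fin2_cases j' with rfl | rfl <;>
      simp only [phi0, phi1] at h
  · have hvv : v = v' := by omega
    rw [hvv]
  · exfalso; omega
  · exfalso; omega
  · have hvv : v = v' := by omega
    rw [hvv]

lemma Ok_phi_image {a0 a1 : ℤ} (hpar : Odd (a0 - a1)) {A : Set (ℤ × Fin 2)}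
    (h0 : Ok (rowS 0 A)) (h1 : Ok (rowS 1 A)) : Ok (phi a0 a1 '' A) := by
  obtain ⟨⟨M0, hM0⟩, ⟨B0, hB0⟩⟩ := h0
  obtain ⟨⟨M1, hM1⟩, ⟨B1, hB1⟩⟩ := h1
  obtain ⟨g, hg⟩ := hpar
  constructor
  · refine ⟨min (2 * M0 + a0) (2 * M1 + a1), fun z hz => ?_⟩
    rcases Int.even_or_odd (z - a0) with ⟨v, hv⟩ | ⟨v, hv⟩
    · refine ⟨(v, 0), hM0 v (by omega), ?_⟩
      rw [phi0]
      omega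
    · refine ⟨(v + g + 1, 1), hM1 _ (by omega), ?_⟩
      rw [phi1]
      omega
  · refine ⟨max (2 * B0 + a0) (2 * B1 + a1), ?_⟩
    rintro z ⟨⟨v, j⟩, hb, rfl⟩
    rcases fin2_cases j with rfl | rfl
    · have := hB0 v hb
      rw [phi0]
      omega
    · have := hB1 v hb
      rw [phi1]
      omega

lemma odd_dvd_of_dvd_two_mul {e k : ℤ} (he : Odd e) (h : e ∣ 2 * k) : e ∣ k := by
  obtain ⟨f, hf⟩ := he
  obtain ⟨q, hq⟩ := h
  exact ⟨(f + 1) * q - k, by linear_combination (f + 1) * hq + k * hf⟩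

lemma dvd_small_eq {e a : ℤ} (he : 0 < e) (h : e ∣ a) (h1 : -e < a) (h2 : a < e) : a = 0 := by
  obtain ⟨d, rfl⟩ := h
  rcases lt_trichotomy d 0 with hd | rfl | hd
  · have : e * d ≤ e * (-1) := mul_le_mul_of_nonneg_left (by omega) (le_of_lt he)
    omega
  · ring
  · have : e * 1 ≤ e * d := mul_le_mul_of_nonneg_left (by omega) (le_of_lt he)
    omega

lemma exists_unique_col {e : ℕ} (hepos : 0 < e) (hodd : Odd (e:ℤ)) (y c : ℤ) :
    ∃! i : ℕ, i < e ∧ (e:ℤ) ∣ (2 * (y - (i:ℤ)) - c) := by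
  obtain ⟨f, hf⟩ := hodd
  set j : ℤ := ((f + 1) * (2 * y - c)) % e with hjdef
  have hj0 : 0 ≤ j := Int.emod_nonneg _ (by positivity)
  have hje : j < e := Int.emod_lt_of_pos _ (by exact_mod_cast hepos)
  have hjq : j = (f + 1) * (2 * y - c) - (e:ℤ) * (((f + 1) * (2 * y - c)) / e) := by
    rw [hjdef, Int.emod_def]
  set q : ℤ := ((f + 1) * (2 * y - c)) / e with hqdef
  refine ⟨j.toNat, ⟨by omega, ?_⟩, ?_⟩
  · have hcast : ((j.toNat : ℤ)) = j := Int.toNat_of_nonneg hj0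
    refine ⟨2 * q - (2 * y - c), ?_⟩
    rw [hcast]
    linear_combination (-2 : ℤ) * hjq + (2 * y - c) * hf
  · rintro i ⟨hie, hidvd⟩
    have hjdvd : (e:ℤ) ∣ (2 * (y - j) - c) := by
      refine ⟨2 * q - (2 * y - c), ?_⟩
      linear_combination (-2 : ℤ) * hjq + (2 * y - c) * hf
    have hdiff : (e:ℤ) ∣ (2 * ((j:ℤ) - (i:ℤ))) := by
      have := Int.dvd_sub hidvd hjdvd
      have heq : (2 * (y - (i:ℤ)) - c) - (2 * (y - j) - c) = 2 * (j - i) := by ring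
      rwa [heq] at this
    have hdvd2 := odd_dvd_of_dvd_two_mul ⟨f, hf⟩ hdiff
    have : (j:ℤ) - i = 0 := dvd_small_eq (by exact_mod_cast hepos) hdvd2 (by omega) (by omega)
    omega

/-- In the image of `e` consecutive columns under φ, each residue class mod `e`
contains exactly one element. -/
lemma Tc_phi_consec {e : ℕ} (hepos : 0 < e) (hodd : Odd (e:ℤ)) {a0 a1 : ℤ}
    (h0 : (e:ℤ) ∣ a0) (h1 : (e:ℤ) ∣ a1) (y : ℤ) (r : ℕ → Fin 2) (c : ℤ) :
    ∃ m : ℤ,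
      c + (e:ℤ) * m ∈ phi a0 a1 '' {b : ℤ × Fin 2 | ∃ i : ℕ, i < e ∧ b = ((y - (i:ℤ), r i))} ∧
      ∀ m' : ℤ,
        c + (e:ℤ) * m' ∈ phi a0 a1 '' {b : ℤ × Fin 2 | ∃ i : ℕ, i < e ∧ b = ((y - (i:ℤ), r i))} →
          m' = m := by
  obtain ⟨i, ⟨hie, hdvd⟩, huniq⟩ := exists_unique_col hepos hodd y c
  have hadvd : (e:ℤ) ∣ (phi a0 a1 (y - (i:ℤ), r i) - c) := by
    rcases fin2_cases (r i) with hr | hr <;> rw [hr]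
    · rw [phi0]
      have h2 : 2 * (y - (i:ℤ)) + a0 - c = (2 * (y - (i:ℤ)) - c) + a0 := by ring
      rw [h2]; exact dvd_add hdvd h0
    · rw [phi1]
      have h2 : 2 * (y - (i:ℤ)) + a1 - c = (2 * (y - (i:ℤ)) - c) + a1 := by ring
      rw [h2]; exact dvd_add hdvd h1
  obtain ⟨m, hm⟩ := hadvd
  refine ⟨m, ⟨(y - (i:ℤ), r i), ⟨i, hie, rfl⟩, by omega⟩, ?_⟩
  rintro m' ⟨b, ⟨i', hi', rfl⟩, hphib⟩
  have hdvd' : (e:ℤ) ∣ (2 * (y - (i':ℤ)) - c) := by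
    rcases fin2_cases (r i') with hr | hr <;> rw [hr] at hphib
    · rw [phi0] at hphib
      obtain ⟨u, hu⟩ := h0
      exact ⟨m' - u, by linear_combination hphib - hu⟩
    · rw [phi1] at hphib
      obtain ⟨u, hu⟩ := h1
      exact ⟨m' - u, by linear_combination hphib - hu⟩
  have hieq : i' = i := huniq i' ⟨hi', hdvd'⟩
  subst hieq
  have h2 : (e:ℤ) * m' = (e:ℤ) * m := by omega
  exact mul_left_cancel₀ (by exact_mod_cast hepos.ne') h2

/-- No-collision: cardinality/charge argument in a single row. -/
lemma exchange_no_collision {U U' : Set ℤ} (hOU : Ok U) (hOU' : Ok U')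
    (hchg : chg U' = chg U) {Pj Qj : Set ℤ} (hPfin : Pj.Finite) (hQfin : Qj.Finite)
    (hcard : Qj.ncard = Pj.ncard) (hPsub : Pj ⊆ U) (hU' : U' = (U \ Pj) ∪ Qj)
    (lb : ℤ) (hPlb : ∀ v ∈ Pj, lb ≤ v) (hQlb : ∀ v ∈ Qj, lb ≤ v) :
    ∀ v ∈ Qj, v ∈ U → v ∈ Pj := by
  obtain ⟨M, hM⟩ := hOU.1
  obtain ⟨M', hM'⟩ := hOU'.1
  set L : ℤ := min (min M M') lb with hLdef
  have hLU : ∀ z : ℤ, z < L → z ∈ U := fun z hz => hM z (by omega)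
  have hLU' : ∀ z : ℤ, z < L → z ∈ U' := fun z hz => hM' z (by omega)
  have hXfin : (U ∩ Set.Ici L).Finite := hOU.finite_inter L
  have hPsubX : Pj ⊆ U ∩ Set.Ici L := fun v hv => ⟨hPsub hv, le_trans (by omega) (hPlb v hv)⟩
  have hQsubI : Qj ⊆ Set.Ici L := fun v hv => le_trans (by omega) (hQlb v hv)
  have hwin : U' ∩ Set.Ici L = ((U ∩ Set.Ici L) \ Pj) ∪ Qj := by
    rw [hU']
    ext v
    simp only [Set.mem_inter_iff, Set.mem_union, Set.mem_diff, Set.mem_Ici]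
    constructor
    · rintro ⟨(⟨h1, h2⟩ | h1), h3⟩
      · exact Or.inl ⟨⟨h1, h3⟩, h2⟩
      · exact Or.inr h1
    · rintro (⟨⟨h1, h3⟩, h2⟩ | h1)
      · exact ⟨Or.inl ⟨h1, h2⟩, h3⟩
      · exact ⟨Or.inr h1, hQsubI h1⟩
  -- cardinalities
  have hsplit : (((U ∩ Set.Ici L) \ Pj) ∪ Qj) = ((U ∩ Set.Ici L) \ Pj) ∪
      (Qj \ ((U ∩ Set.Ici L) \ Pj)) := by
    rw [Set.union_diff_self]
  have hdisj : Disjoint ((U ∩ Set.Ici L) \ Pj) (Qj \ ((U ∩ Set.Ici L) \ Pj)) :=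
    Set.disjoint_sdiff_right
  have hnc1 : (U' ∩ Set.Ici L).ncard =
      ((U ∩ Set.Ici L) \ Pj).ncard + (Qj \ ((U ∩ Set.Ici L) \ Pj)).ncard := by
    rw [hwin, hsplit, Set.ncard_union_eq hdisj (hXfin.diff) (hQfin.diff)]
  have hnc2 : ((U ∩ Set.Ici L) \ Pj).ncard = (U ∩ Set.Ici L).ncard - Pj.ncard :=
    Set.ncard_diff hPsubX hPfin
  have hPle : Pj.ncard ≤ (U ∩ Set.Ici L).ncard := Set.ncard_le_ncard hPsubX hXfin
  have hc1 : chg U = ((U ∩ Set.Ici L).ncard : ℤ) + L := chg_eq hOU hLU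
  have hc2 : chg U' = ((U' ∩ Set.Ici L).ncard : ℤ) + L := chg_eq hOU' hLU'
  have hkey : (Qj \ ((U ∩ Set.Ici L) \ Pj)).ncard = Qj.ncard := by omega
  have heqset : Qj \ ((U ∩ Set.Ici L) \ Pj) = Qj := by
    apply Set.eq_of_subset_of_ncard_le Set.diff_subset (by omega) hQfin
  intro v hv hvU
  by_contra hvP
  have hvD : v ∈ (U ∩ Set.Ici L) \ Pj := ⟨⟨hvU, hQsubI hv⟩, hvP⟩
  rw [← heqset] at hv
  exact hv.2 hvD

lemma injnat (x : ℤ) : Function.Injective (fun i : ℕ => x - (i:ℤ)) := by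
  intro a b h
  simp only at h
  omega

lemma edge_invariant {e : ℕ} (hepos : 0 < e) (hodd : Odd (e:ℤ)) {a0 a1 : ℤ}
    (h0 : (e:ℤ) ∣ a0) (h1 : (e:ℤ) ∣ a1) (hpar : Odd (a0 - a1)) (s : ℤ × ℤ)
    {w w' : Partition × Partition} (hE : SlInfEdge e s w w') (c : ℤ) :
    chg (Tc e c (phi a0 a1 '' abacus w' s)) = chg (Tc e c (phi a0 a1 '' abacus w s)) := by
  obtain ⟨k, _, _, P, hKth, hA', _⟩ := hE
  obtain ⟨Qc, hQc, hQk⟩ := hKth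
  obtain ⟨x, r, hPdef, hbeads, hmax, _, _⟩ := hQc k le_rfl
  rw [hQk] at hPdef
  subst hPdef
  set Pset : Set (ℤ × Fin 2) := {b : ℤ × Fin 2 | ∃ i : ℕ, i < e ∧ b = ((x - (i:ℤ), r i))}
    with hPsetdef
  set Qset : Set (ℤ × Fin 2) := {b : ℤ × Fin 2 | ∃ i : ℕ, i < e ∧ b = ((x + 1 - (i:ℤ), r i))}
    with hQsetdef
  have hQdef : shiftRight Pset = Qset := by
    ext ⟨v, j⟩
    simp only [shiftRight, hPsetdef, hQsetdef, Set.mem_setOf_eq, Prod.mk.injEq]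
    constructor
    · rintro ⟨i, hi, hv1, hv2⟩; exact ⟨i, hi, by omega, hv2⟩
    · rintro ⟨i, hi, hv1, hv2⟩; exact ⟨i, hi, by omega, hv2⟩
  rw [hQdef] at hA'
  have hPsubA : Pset ⊆ abacus w s := by
    rintro b ⟨i, hi, rfl⟩
    exact (hbeads i hi).1
  -- row-level descriptions
  have hrowP : ∀ j : Fin 2, rowS j Pset =
      (fun i : ℕ => x - (i:ℤ)) '' {i : ℕ | i < e ∧ r i = j} := by
    intro j
    ext v
    simp only [rowS, hPsetdef, Set.mem_setOf_eq, Set.mem_image, Prod.mk.injEq]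
    constructor
    · rintro ⟨i, hi, hv1, hv2⟩; exact ⟨i, ⟨hi, hv2.symm⟩, hv1.symm⟩
    · rintro ⟨i, ⟨hi, hri⟩, rfl⟩; exact ⟨i, hi, rfl, hri.symm⟩
  have hrowQ : ∀ j : Fin 2, rowS j Qset =
      (fun i : ℕ => x + 1 - (i:ℤ)) '' {i : ℕ | i < e ∧ r i = j} := by
    intro j
    ext v
    simp only [rowS, hQsetdef, Set.mem_setOf_eq, Set.mem_image, Prod.mk.injEq]
    constructor
    · rintro ⟨i, hi, hv1, hv2⟩; exact ⟨i, ⟨hi, hv2.symm⟩, hv1.symm⟩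
    · rintro ⟨i, ⟨hi, hri⟩, rfl⟩; exact ⟨i, hi, rfl, hri.symm⟩
  have hidxfin : ∀ j : Fin 2, ({i : ℕ | i < e ∧ r i = j}).Finite := by
    intro j
    exact Set.Finite.subset (Set.finite_Iio e) (fun i hi => hi.1)
  -- no collision
  have hnc : ∀ b ∈ Qset, b ∈ abacus w s → b ∈ Pset := by
    intro b hbQ hbA
    have hrow := exchange_no_collision (U := rowS b.2 (abacus w s)) (U' := rowS b.2 (abacus w' s))
      (Ok_rowS_abacus w s b.2) (Ok_rowS_abacus w' s b.2)
      (by rw [chg_rowS_abacus, chg_rowS_abacus])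
      (Pj := rowS b.2 Pset) (Qj := rowS b.2 Qset)
      (by rw [hrowP]; exact Set.Finite.image _ (hidxfin b.2))
      (by rw [hrowQ]; exact Set.Finite.image _ (hidxfin b.2))
      (by rw [hrowP, hrowQ, Set.ncard_image_of_injective _ (injnat x),
            Set.ncard_image_of_injective _ (injnat (x+1))])
      (fun v hv => hPsubA hv)
      (by
        ext v
        simp only [rowS, hA', Set.mem_union, Set.mem_diff, Set.mem_setOf_eq])
      (x - e)
      (by
        intro v hv
        rw [hrowP] at hv
        obtain ⟨i, ⟨hi, _⟩, rfl⟩ := hv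
        simp only
        omega)
      (by
        intro v hv
        rw [hrowQ] at hv
        obtain ⟨i, ⟨hi, _⟩, rfl⟩ := hv
        simp only
        omega)
    exact hrow b.1 hbQ hbA
  -- residue class analysis
  obtain ⟨ma, hma_mem, hma_uniq⟩ := Tc_phi_consec hepos hodd h0 h1 x r c
  obtain ⟨mb, hmb_mem, hmb_uniq⟩ := Tc_phi_consec hepos hodd h0 h1 (x + 1) r c
  rw [← hPsetdef] at hma_mem hma_uniq
  have hQy : {b : ℤ × Fin 2 | ∃ i : ℕ, i < e ∧ b = ((x + 1 - (i:ℤ), r i))} = Qset := rfl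
  rw [hQy] at hmb_mem hmb_uniq
  have hOA : Ok (phi a0 a1 '' abacus w s) :=
    Ok_phi_image hpar (Ok_rowS_abacus w s 0) (Ok_rowS_abacus w s 1)
  have hTcA : Ok (Tc (e:ℤ) c (phi a0 a1 '' abacus w s)) :=
    Ok_Tc (by exact_mod_cast hepos) c hOA
  have hTceq : Tc (e:ℤ) c (phi a0 a1 '' abacus w' s) =
      insert mb ((Tc (e:ℤ) c (phi a0 a1 '' abacus w s)) \ {ma}) := by
    ext m
    simp only [Tc, Set.mem_setOf_eq, Set.mem_insert_iff, Set.mem_diff, Set.mem_singleton_iff]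
    rw [hA', Set.image_union, Set.image_diff (phi_inj hpar)]
    simp only [Set.mem_union, Set.mem_diff]
    constructor
    · rintro (⟨hmem, hnP⟩ | hmem)
      · right
        refine ⟨hmem, fun hc => hnP ?_⟩
        subst hc
        exact hma_mem
      · left
        exact hmb_uniq m hmem
    · rintro (rfl | ⟨hmem, hne⟩)
      · exact Or.inr hmb_mem
      · left
        refine ⟨hmem, fun hc => hne (hma_uniq m hc)⟩
  rw [hTceq]
  apply chg_exch hTcA
  · show c + (e:ℤ) * ma ∈ phi a0 a1 '' abacus w s
    exact Set.image_mono hPsubA hma_mem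
  · rintro ⟨hmem, hne⟩
    obtain ⟨q, hqQ, hqval⟩ := hmb_mem
    obtain ⟨u, huA, huval⟩ := hmem
    have huq : u = q := phi_inj hpar (by rw [huval, hqval])
    subst huq
    have hqP : u ∈ Pset := hnc u hqQ huA
    apply hne
    exact hma_uniq mb ⟨u, hqP, hqval⟩

/-! ### Staircase residue computations and the twisted 2-quotient -/

lemma mem_beta_staircase (t : ℕ) (z : ℤ) :
    z ∈ (staircase t).betaSet ↔ ∃ k : ℕ, z = ((t - k : ℕ) : ℤ) - k := Iff.rfl

lemma Tc20_stair_even (u : ℕ) : Tc 2 0 ((staircase (2*u)).betaSet) = Set.Iio ((u:ℤ) + 1) := by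
  ext m
  simp only [Tc, Set.mem_setOf_eq, mem_beta_staircase, Set.mem_Iio]
  constructor
  · rintro ⟨k, hk⟩; omega
  · intro hm
    rcases le_or_gt (-(u:ℤ)) m with h | h
    · exact ⟨((u:ℤ) - m).toNat, by omega⟩
    · exact ⟨(-2*m).toNat, by omega⟩

lemma Tc21_stair_even (u : ℕ) : Tc 2 1 ((staircase (2*u)).betaSet) = Set.Iio (-(u:ℤ)) := by
  ext m
  simp only [Tc, Set.mem_setOf_eq, mem_beta_staircase, Set.mem_Iio]
  constructor
  · rintro ⟨k, hk⟩; omega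
  · intro hm
    exact ⟨(-1-2*m).toNat, by omega⟩

lemma Tc20_stair_odd (u : ℕ) : Tc 2 0 ((staircase (2*u+1)).betaSet) = Set.Iio (-(u:ℤ)) := by
  ext m
  simp only [Tc, Set.mem_setOf_eq, mem_beta_staircase, Set.mem_Iio]
  constructor
  · rintro ⟨k, hk⟩; omega
  · intro hm
    exact ⟨(-2*m).toNat, by omega⟩

lemma Tc21_stair_odd (u : ℕ) : Tc 2 1 ((staircase (2*u+1)).betaSet) = Set.Iio ((u:ℤ) + 1) := by
  ext m
  simp only [Tc, Set.mem_setOf_eq, mem_beta_staircase, Set.mem_Iio]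
  constructor
  · rintro ⟨k, hk⟩; omega
  · intro hm
    rcases le_or_gt (-(u:ℤ) - 1) m with h | h
    · exact ⟨((u:ℤ) - m).toNat, by omega⟩
    · exact ⟨(-1-2*m).toNat, by omega⟩

def aa0 (e t : ℕ) : ℤ := if t % 2 = 0 then (e:ℤ) else 0
def aa1 (e t : ℕ) : ℤ := if t % 2 = 0 then 0 else -(e:ℤ)

lemma aa0_dvd (e t : ℕ) : (e:ℤ) ∣ aa0 e t := by
  unfold aa0; split_ifs
  · exact dvd_refl _
  · exact dvd_zero _

lemma aa1_dvd (e t : ℕ) : (e:ℤ) ∣ aa1 e t := by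
  unfold aa1; split_ifs
  · exact dvd_zero _
  · exact dvd_neg.mpr (dvd_refl _)

lemma aa_sub (e t : ℕ) : aa0 e t - aa1 e t = (e:ℤ) := by
  unfold aa0 aa1; split_ifs <;> ring

/-- The odd β-numbers set, as a shift of `Tc 2 1`. -/
lemma oddset_shift (p : Partition) :
    {z : ℤ | 2 * z - 1 ∈ p.betaSet} = {z : ℤ | z - 1 ∈ Tc 2 1 p.betaSet} := by
  ext z
  simp only [Set.mem_setOf_eq, Tc]
  have harg : 1 + 2 * (z - 1) = 2 * z - 1 := by ring
  rw [harg]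

lemma evenset_eq (p : Partition) :
    {z : ℤ | 2 * z ∈ p.betaSet} = Tc 2 0 p.betaSet := by
  ext z
  simp only [Set.mem_setOf_eq, Tc]
  have harg : 0 + 2 * z = 2 * z := by ring
  rw [harg]

lemma chg_oddset (p : Partition) : chg {z : ℤ | 2 * z - 1 ∈ p.betaSet} =
    chg (Tc 2 1 p.betaSet) + 1 := by
  rw [oddset_shift]
  exact chg_shift (Ok_Tc (by norm_num) 1 (Ok_betaSet p)) 1

lemma charge_determined {q : Partition} {c : ℤ} {S : Set ℤ}
    (h : q.chargedBetaSet c = S) : c = chg S - 1 := by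
  rw [← h, chg_chargedBetaSet]
  ring

/-- Membership in a charged β-set, re-centered at another charge. -/
lemma mem_chargedBetaSet_recenter {q : Partition} {c : ℤ} {S : Set ℤ}
    (h : q.chargedBetaSet c = S) (s v : ℤ) :
    v ∈ q.chargedBetaSet s ↔ (v - s + c) ∈ S := by
  rw [← h, chargedBetaSet_eq_shift, chargedBetaSet_eq_shift]
  simp only [Set.mem_setOf_eq]
  have harg : v - s + c - c = v - s := by ring
  rw [harg]

lemma mem_abacus_row0 (w : Partition × Partition) (s : ℤ × ℤ) (v : ℤ) :
    ((v, (0 : Fin 2)) ∈ abacus w s) ↔ v ∈ w.1.chargedBetaSet s.1 := by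
  simp [abacus]

lemma mem_abacus_row1 (w : Partition × Partition) (s : ℤ × ℤ) (v : ℤ) :
    ((v, (1 : Fin 2)) ∈ abacus w s) ↔ v ∈ w.2.chargedBetaSet s.2 := by
  simp only [abacus, Set.mem_setOf_eq]
  norm_num

lemma phi_abacus {e t : ℕ} (hodd : Odd (e:ℤ)) {p : Partition} {w : Partition × Partition}
    (h : IsTwistedQuotient t p w) :
    p.betaSet = phi (aa0 e t) (aa1 e t) '' abacus w (tauCharge e t) := by
  obtain ⟨f, hf⟩ := hodd
  have hf0 : 0 ≤ f := by omega
  obtain ⟨hcore, hq⟩ := h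
  have hinv2 : ∀ c : ℤ, chg (Tc 2 c ((staircase t).betaSet)) = chg (Tc 2 c p.betaSet) := by
    intro c
    have h2 := chg_Tc_reflTrans (en := 2) (by norm_num) hcore.1 c
    norm_num at h2
    exact h2
  rcases Nat.even_or_odd t with ⟨u, hu⟩ | ⟨u, hu⟩
  · -- t even, t = 2u
    have htmod : t % 2 = 0 := by omega
    have haa0 : aa0 e t = (e:ℤ) := if_pos htmod
    have haa1 : aa1 e t = 0 := if_pos htmod
    have htz : (t:ℤ) = 2*u := by omega
    have hstair : staircase t = staircase (2*u) := by rw [show t = 2*u by omega]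
    have hT1 : chg (Tc 2 1 p.betaSet) = -(u:ℤ) := by
      rw [← hinv2 1, hstair, Tc21_stair_even, chg_Iio]
    have hT0 : chg (Tc 2 0 p.betaSet) = (u:ℤ) + 1 := by
      rw [← hinv2 0, hstair, Tc20_stair_even, chg_Iio]
    rw [if_pos htmod] at hq
    obtain ⟨⟨c1, hc1⟩, ⟨c2, hc2⟩⟩ := hq
    have hc1v : c1 = -(u:ℤ) := by
      have := charge_determined hc1
      rw [chg_oddset, hT1] at this
      omega
    have hc2v : c2 = (u:ℤ) := by
      have := charge_determined hc2
      rw [evenset_eq, hT0] at this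
      omega
    have hs : tauCharge e t = (-((u:ℤ) + f + 1), (u:ℤ)) := by
      rw [tauCharge, if_pos htmod]
      have h1 : (t:ℤ) + 1 + e = 2 * ((u:ℤ) + f + 1) := by omega
      have h2 : (t:ℤ) = 2 * (u:ℤ) := htz
      rw [h1, h2, Int.mul_ediv_cancel_left _ two_ne_zero, Int.mul_ediv_cancel_left _ two_ne_zero]
    have hrow0 : ∀ v : ℤ, ((v, (0 : Fin 2)) ∈ abacus w (tauCharge e t)) ↔
        2 * v + (e:ℤ) ∈ p.betaSet := by
      intro v
      rw [mem_abacus_row0, mem_chargedBetaSet_recenter hc1, hs, hc1v]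
      simp only [Set.mem_setOf_eq]
      have harg : 2 * (v - -((u:ℤ) + f + 1) + -(u:ℤ)) - 1 = 2 * v + (e:ℤ) := by omega
      rw [harg]
    have hrow1 : ∀ v : ℤ, ((v, (1 : Fin 2)) ∈ abacus w (tauCharge e t)) ↔
        2 * v ∈ p.betaSet := by
      intro v
      rw [mem_abacus_row1, mem_chargedBetaSet_recenter hc2, hs, hc2v]
      simp only [Set.mem_setOf_eq]
      have harg : 2 * (v - (u:ℤ) + (u:ℤ)) = 2 * v := by ring
      rw [harg]
    ext z
    constructor
    · intro hz
      rcases Int.even_or_odd z with ⟨v, hv⟩ | ⟨v, hv⟩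
      · have hm : ((v, (1:Fin 2)) ∈ abacus w (tauCharge e t)) :=
          (hrow1 v).mpr (by rw [show 2*v = z by omega]; exact hz)
        refine ⟨(v, 1), hm, ?_⟩
        rw [phi1, haa1]
        omega
      · have hm : ((v - f, (0:Fin 2)) ∈ abacus w (tauCharge e t)) :=
          (hrow0 (v - f)).mpr (by rw [show 2*(v-f) + (e:ℤ) = z by omega]; exact hz)
        refine ⟨(v - f, 0), hm, ?_⟩
        rw [phi0, haa0]
        omega
    · rintro ⟨⟨v, j⟩, hb, rfl⟩
      rcases fin2_cases j with rfl | rfl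
      · rw [phi0, haa0]
        exact (hrow0 v).mp hb
      · rw [phi1, haa1]
        rw [show 2*v + (0:ℤ) = 2*v by ring]
        exact (hrow1 v).mp hb
  · -- t odd, t = 2u+1
    have htmod : ¬ (t % 2 = 0) := by omega
    have haa0 : aa0 e t = 0 := if_neg htmod
    have haa1 : aa1 e t = -(e:ℤ) := if_neg htmod
    have htz : (t:ℤ) = 2*u + 1 := by omega
    have hstair : staircase t = staircase (2*u+1) := by rw [show t = 2*u+1 by omega]
    have hT1 : chg (Tc 2 1 p.betaSet) = (u:ℤ) + 1 := by
      rw [← hinv2 1, hstair, Tc21_stair_odd, chg_Iio]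
    have hT0 : chg (Tc 2 0 p.betaSet) = -(u:ℤ) := by
      rw [← hinv2 0, hstair, Tc20_stair_odd, chg_Iio]
    rw [if_neg htmod] at hq
    obtain ⟨⟨c1, hc1⟩, ⟨c2, hc2⟩⟩ := hq
    -- here w.2 carries the odd part, w.1 the even part
    have hc1v : c1 = (u:ℤ) + 1 := by
      have := charge_determined hc1
      rw [chg_oddset, hT1] at this
      omega
    have hc2v : c2 = -(u:ℤ) - 1 := by
      have := charge_determined hc2
      rw [evenset_eq, hT0] at this
      omega
    have hs : tauCharge e t = (-((u:ℤ) + 1), (u:ℤ) + f + 1) := by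
      rw [tauCharge, if_neg htmod]
      have h1 : (t:ℤ) + 1 = 2 * ((u:ℤ) + 1) := by omega
      have h2 : (t:ℤ) + e = 2 * ((u:ℤ) + f + 1) := by omega
      rw [h1, h2, Int.mul_ediv_cancel_left _ two_ne_zero, Int.mul_ediv_cancel_left _ two_ne_zero]
    have hrow0 : ∀ v : ℤ, ((v, (0 : Fin 2)) ∈ abacus w (tauCharge e t)) ↔
        2 * v ∈ p.betaSet := by
      intro v
      rw [mem_abacus_row0, mem_chargedBetaSet_recenter hc2, hs, hc2v]
      simp only [Set.mem_setOf_eq]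
      have harg : 2 * (v - -((u:ℤ) + 1) + (-(u:ℤ) - 1)) = 2 * v := by ring
      rw [harg]
    have hrow1 : ∀ v : ℤ, ((v, (1 : Fin 2)) ∈ abacus w (tauCharge e t)) ↔
        2 * v - (e:ℤ) ∈ p.betaSet := by
      intro v
      rw [mem_abacus_row1, mem_chargedBetaSet_recenter hc1, hs, hc1v]
      simp only [Set.mem_setOf_eq]
      have harg : 2 * (v - ((u:ℤ) + f + 1) + ((u:ℤ) + 1)) - 1 = 2 * v - (e:ℤ) := by omega
      rw [harg]
    ext z
    constructor
    · intro hz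
      rcases Int.even_or_odd z with ⟨v, hv⟩ | ⟨v, hv⟩
      · have hm : ((v, (0:Fin 2)) ∈ abacus w (tauCharge e t)) :=
          (hrow0 v).mpr (by rw [show 2*v = z by omega]; exact hz)
        refine ⟨(v, 0), hm, ?_⟩
        rw [phi0, haa0]
        omega
      · have hm : ((v + f + 1, (1:Fin 2)) ∈ abacus w (tauCharge e t)) :=
          (hrow1 (v + f + 1)).mpr (by rw [show 2*(v+f+1) - (e:ℤ) = z by omega]; exact hz)
        refine ⟨(v + f + 1, 1), hm, ?_⟩
        rw [phi1, haa1]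
        omega
    · rintro ⟨⟨v, j⟩, hb, rfl⟩
      rcases fin2_cases j with rfl | rfl
      · rw [phi0, haa0]
        rw [show 2*v + (0:ℤ) = 2*v by ring]
        exact (hrow0 v).mp hb
      · rw [phi1, haa1]
        rw [show 2*v + -(e:ℤ) = 2*v - e by ring]
        exact (hrow1 v).mp hb

lemma reach_invariant {e : ℕ} (hepos : 0 < e) (hodd : Odd (e:ℤ)) {a0 a1 : ℤ}
    (h0 : (e:ℤ) ∣ a0) (h1 : (e:ℤ) ∣ a1) (hpar : Odd (a0 - a1)) (s : ℤ × ℤ)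
    {w w' : Partition × Partition} (h : Relation.ReflTransGen (SlInfEdge e s) w w') (c : ℤ) :
    chg (Tc e c (phi a0 a1 '' abacus w' s)) = chg (Tc e c (phi a0 a1 '' abacus w s)) := by
  induction h with
  | refl => rfl
  | tail hpre hedge ih =>
    rw [edge_invariant hepos hodd h0 h1 hpar s hedge c]
    exact ih

/-- If `λ` has 2-core `Δ_t` and totally `e`-periodic abacus, then for any
`ν` in the `sl_∞`-crystal obtained from `τ(λ)` by applying `ã_σ` (i.e. reachable from
`τ(λ)` by a path of `sl_∞`-crystal edges), the partition `μ = τ⁻¹(ν)` has the same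
`e`-core as `λ`. -/
theorem atilde_preserves_ecore
    (e t : ℕ) (he : Odd e) (he3 : 3 ≤ e)
    (lam : Partition) (bp : Partition × Partition)
    (htau : IsTwistedQuotient t lam bp)
    (htp : TotallyPeriodic e (abacus bp (tauCharge e t)))
    (nu : Partition × Partition)
    (hreach : Relation.ReflTransGen (SlInfEdge e (tauCharge e t)) bp nu)
    (mu : Partition) (hmu : IsTwistedQuotient t mu nu) :
    SameECore e lam mu := by
  have hepos : 0 < e := by omega
  have hoddz : Odd (e:ℤ) := by
    obtain ⟨f, hf⟩ := he
    exact ⟨(f:ℤ), by exact_mod_cast hf⟩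
  have hpar : Odd (aa0 e t - aa1 e t) := by rw [aa_sub]; exact hoddz
  have h1 := phi_abacus (t := t) (e := e) hoddz htau
  have h2 := phi_abacus (t := t) (e := e) hoddz hmu
  have hinv := reach_invariant hepos hoddz (aa0_dvd e t) (aa1_dvd e t) hpar
    (tauCharge e t) hreach
  have hclass : ∀ c : ℤ, chg (Tc e c mu.betaSet) = chg (Tc e c lam.betaSet) := by
    intro c
    rw [h1, h2, hinv c]
  obtain ⟨ql, hql⟩ := exists_core e hepos lam
  obtain ⟨qm, hqm⟩ := exists_core e hepos mu
  have hql2 := fun c => chg_Tc_reflTrans hepos hql.1 c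
  have hqm2 := fun c => chg_Tc_reflTrans hepos hqm.1 c
  have hq : ql = qm := core_beta_eq hepos hql.2 hqm.2
    (fun c => by rw [hql2 c, hqm2 c]; exact (hclass c).symm)
  exact ⟨ql, hql, by rw [hq]; exact hqm⟩

end GUnBranching
end

section
/- Let e ≥ 3 be odd. For all integers t ≥ 0 and m ≥ 0, the partition Δ_t ⊔ (1^{2m}) has 2-core Δ_t and twisted 2-quotient τ(Δ_t ⊔ 1^{2m}) = |(1^m, ∅), s_t⟩. -/
namespace GUnBranching

lemma staircase_eq (t : ℕ) : staircase t = staircaseColumn t 0 := by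
  apply Partition.ext'; funext k
  simp only [staircase, staircaseColumn]
  split_ifs <;> omega

lemma mem_beta_staircaseColumn (t r : ℕ) (z : ℤ) :
    z ∈ (staircaseColumn t r).betaSet ↔
      ((z ≤ 1 - t ∧ z ≠ 1 - t - r) ∨ (2 - t ≤ z ∧ z ≤ t ∧ (z - t) % 2 = 0)) := by
  simp only [Partition.betaSet, staircaseColumn, Set.mem_setOf_eq]
  constructor
  · rintro ⟨k, rfl⟩
    split_ifs <;> omega
  · rintro (⟨h1, h2⟩ | ⟨h1, h2, h3⟩)
    · rcases le_or_gt z (-(t : ℤ) - r) with h | h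
      · exact ⟨(-z).toNat, by split_ifs <;> omega⟩
      · exact ⟨(1 - z).toNat, by split_ifs <;> omega⟩
    · exact ⟨(((t : ℤ) - z) / 2).toNat, by split_ifs <;> omega⟩

lemma charged_column (m : ℕ) (c : ℤ) :
    (column m).chargedBetaSet c = {z | z ≤ c + 1 ∧ z ≠ c + 1 - m} := by
  ext z
  simp only [Partition.chargedBetaSet, column, threeTwoOne, Set.mem_setOf_eq]
  constructor
  · rintro ⟨k, rfl⟩; split_ifs <;> omega
  · rintro ⟨h1, h2⟩
    rcases le_or_gt z (c - m) with h | h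
    · exact ⟨(c - z).toNat, by split_ifs <;> omega⟩
    · exact ⟨(c + 1 - z).toNat, by split_ifs <;> omega⟩

lemma charged_empty (c : ℤ) :
    emptyPartition.chargedBetaSet c = {z | z ≤ c} := by
  ext z
  simp only [Partition.chargedBetaSet, emptyPartition, Set.mem_setOf_eq]
  constructor
  · rintro ⟨k, rfl⟩; omega
  · intro h; exact ⟨(c - z).toNat, by omega⟩

lemma remove_step (t n : ℕ) :
    RemoveHook 2 (staircaseColumn t (2 * (n + 1))) (staircaseColumn t (2 * n)) := by
  refine ⟨1 - t - 2 * n, ?_, ?_, ?_⟩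
  · rw [mem_beta_staircaseColumn]; left; push_cast; omega
  · rw [mem_beta_staircaseColumn]; push_cast; omega
  · ext z
    simp only [Set.mem_insert_iff, Set.mem_diff, Set.mem_singleton_iff,
      mem_beta_staircaseColumn]
    push_cast
    omega

lemma rtg_staircaseColumn (t m : ℕ) :
    Relation.ReflTransGen (RemoveHook 2) (staircaseColumn t (2 * m)) (staircase t) := by
  induction m with
  | zero => rw [staircase_eq]
  | succ n ih => exact Relation.ReflTransGen.head (remove_step t n) ih

lemma core_staircase (t : ℕ) : IsECore 2 (staircase t) := by
  rintro mu ⟨x, hx, hnx, -⟩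
  rw [staircase_eq, mem_beta_staircaseColumn] at hx hnx
  push_cast at hx hnx
  omega

/-- For `t ≥ 0`, `m ≥ 0`, the partition `Δ_t ⊔ 1^{2m}` has 2-core `Δ_t`
and twisted 2-quotient `τ(Δ_t ⊔ 1^{2m}) = |(1^m, ∅), s_t⟩`. -/
theorem twisted_quotient_staircase_even_column
    (e t m : ℕ) (he : Odd e) (he3 : 3 ≤ e) :
    IsTwistedQuotient t (staircaseColumn t (2 * m)) (column m, emptyPartition) := by
  refine ⟨⟨rtg_staircaseColumn t m, core_staircase t⟩, ?_⟩
  split_ifs with ht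
  · constructor
    · refine ⟨-((t : ℤ) / 2), ?_⟩
      rw [charged_column]
      ext z
      simp only [Set.mem_setOf_eq, mem_beta_staircaseColumn]
      push_cast
      omega
    · refine ⟨(t : ℤ) / 2, ?_⟩
      rw [charged_empty]
      ext z
      simp only [Set.mem_setOf_eq, mem_beta_staircaseColumn]
      push_cast
      omega
  · constructor
    · refine ⟨((t : ℤ) + 1) / 2, ?_⟩
      rw [charged_empty]
      ext z
      simp only [Set.mem_setOf_eq, mem_beta_staircaseColumn]
      push_cast
      omega
    · refine ⟨-(((t : ℤ) + 1) / 2), ?_⟩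
      rw [charged_column]
      ext z
      simp only [Set.mem_setOf_eq, mem_beta_staircaseColumn]
      push_cast
      omega

end GUnBranching
end
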